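/- arXiv:1102.1440 — 2 statements merged into one kernel-verified Lean document; each statement's English description precedes it below -/
import Mathlib

section
/- Let p ≥ 3 be a prime, G = (V, E) a hypergraph, e ∈ E a hyperedge, and C : V → Z_p a state. Let v1 ≠ v2 be two vertices of e such that (C(v1), C(v2)) ∉ {(0, 0), (p−1, p−1)}. Then the state D defined by D(v1) = C(v1), D(v2) = C(v2), D(u) = C(u) + 1 for every u ∈ e with u ∉ {v1, v2}, and D(u) = C(u) for u ∉ e, is reachable from C by the Z_p-annihilating walk using only moves on the hyperedge e. -/
/-- A single move of the `ZMod p`-annihilating walk made at some vertex of the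
hyperedge `e`, on the hyperedge `e`. -/
def AnnMoveOn {V : Type*} [DecidableEq V] {p : ℕ} (e : Finset V)
    (w w' : V → ZMod p) : Prop :=
  ∃ v ∈ e, w v ≠ 0 ∧
    ∀ u, w' u = if u = v then w u - 1 else if u ∈ e then w u + 1 else w u

/-- `w2` is reachable from `w1` using only moves on the hyperedge `e`. -/
def AnnReachableOn {V : Type*} [DecidableEq V] {p : ℕ} (e : Finset V)
    (w1 w2 : V → ZMod p) : Prop :=
  Relation.ReflTransGen (AnnMoveOn e) w1 w2

lemma pair_step {p : ℕ} {V : Type*} [DecidableEq V]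
    (e : Finset V) (a b : V) (ha : a ∈ e) (hb : b ∈ e) (hab : a ≠ b)
    (w : V → ZMod p) (hwa : w a ≠ 0) (hwb : w b + 1 ≠ 0) :
    AnnReachableOn e w
      (fun u => if u = a then w a else if u = b then w b
        else if u ∈ e then w u + 2 else w u) := by
  set w' : V → ZMod p :=
    fun u => if u = a then w u - 1 else if u ∈ e then w u + 1 else w u with hw'
  have h1 : AnnMoveOn e w w' := ⟨a, ha, hwa, fun u => rfl⟩
  have hw'b : w' b = w b + 1 := by
    simp only [hw']
    rw [if_neg hab.symm, if_pos hb]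
  set w'' : V → ZMod p :=
    fun u => if u = b then w' u - 1 else if u ∈ e then w' u + 1 else w' u with hw''
  have h2 : AnnMoveOn e w' w'' := ⟨b, hb, by rw [hw'b]; exact hwb, fun u => rfl⟩
  have hreach : AnnReachableOn e w w'' :=
    Relation.ReflTransGen.head h1 (Relation.ReflTransGen.single h2)
  have heq : (fun u => if u = a then w a else if u = b then w b
      else if u ∈ e then w u + 2 else w u) = w'' := by
    funext u
    by_cases hub : u = b
    · subst hub
      simp [hw'', hw', hab.symm, hb]
    · by_cases hua : u = a
      · subst hua
        simp [hw'', hw', hub, ha]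
      · by_cases hue : u ∈ e
        · simp only [hw'', hw', if_neg hua, if_neg hub, if_pos hue]
          ring
        · simp [hw'', hw', hua, hub, hue]
  rw [heq]
  exact hreach

lemma reach_pairs {p : ℕ} {V : Type*} [DecidableEq V]
    (e : Finset V) (a b : V) (ha : a ∈ e) (hb : b ∈ e) (hab : a ≠ b)
    (C : V → ZMod p) (hCa : C a ≠ 0) (hCb : C b + 1 ≠ 0) (k : ℕ) :
    AnnReachableOn e C
      (fun u => if u = a then C a else if u = b then C b
        else if u ∈ e then C u + 2 * (k : ZMod p) else C u) := by
  induction k with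
  | zero =>
    have h0 : (fun u => if u = a then C a else if u = b then C b
        else if u ∈ e then C u + 2 * ((0 : ℕ) : ZMod p) else C u) = C := by
      funext u; split_ifs <;> simp_all
    rw [h0]
    exact Relation.ReflTransGen.refl
  | succ k ih =>
    refine ih.trans ?_
    set F : V → ZMod p := fun u => if u = a then C a else if u = b then C b
        else if u ∈ e then C u + 2 * (k : ZMod p) else C u with hF
    have hFa : F a = C a := by simp [hF]
    have hFb : F b = C b := by simp [hF, hab.symm]
    have hstep := pair_step e a b ha hb hab F (by rw [hFa]; exact hCa)
      (by rw [hFb]; exact hCb)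
    unfold AnnReachableOn at hstep
    convert hstep using 1
    funext u
    by_cases hua : u = a
    · simp [hua, hFa]
    · by_cases hub : u = b
      · simp [hub, hFb, hab.symm]
      · by_cases hue : u ∈ e
        · simp only [if_neg hua, if_neg hub, if_pos hue, hF]
          push_cast
          ring
        · simp [hua, hub, hue, hF]

/-- if `v1 ≠ v2` lie in the hyperedge `e` and `(C v1, C v2)` is neither
`(0,0)` nor `(p-1,p-1)`, then the state obtained from `C` by increasing by one the value
at every vertex of `e` other than `v1, v2` (and keeping everything else fixed) is
reachable from `C` using only moves on `e`. -/
theorem stmt5 {p : ℕ} [Fact p.Prime] (hp : 3 ≤ p)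
    {V : Type*} [DecidableEq V]
    (E : Finset (Finset V)) (e : Finset V) (he : e ∈ E)
    (C : V → ZMod p) (v1 v2 : V) (hv1 : v1 ∈ e) (hv2 : v2 ∈ e) (hne : v1 ≠ v2)
    (hgood : ¬ (C v1 = 0 ∧ C v2 = 0) ∧
             ¬ (C v1 = (p : ZMod p) - 1 ∧ C v2 = (p : ZMod p) - 1)) :
    AnnReachableOn e C
      (fun u => if u = v1 then C v1 else if u = v2 then C v2
        else if u ∈ e then C u + 1 else C u) := by
  have hp' : p.Prime := Fact.out
  have hodd : Odd p := hp'.odd_of_ne_two (by omega)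
  obtain ⟨m, hm⟩ := hodd
  have h2n : 2 * (m + 1) = p + 1 := by omega
  have hp0 : ((p : ℕ) : ZMod p) = 0 := ZMod.natCast_self p
  have hcast : 2 * ((m + 1 : ℕ) : ZMod p) = 1 := by
    calc 2 * ((m + 1 : ℕ) : ZMod p) = ((2 * (m + 1) : ℕ) : ZMod p) := by push_cast; ring
    _ = ((p + 1 : ℕ) : ZMod p) := by rw [h2n]
    _ = 1 := by push_cast [hp0]; ring
  have hne10 : (0 : ZMod p) ≠ (p : ZMod p) - 1 := by
    rw [hp0]
    intro h
    exact one_ne_zero (α := ZMod p) (by linear_combination h)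
  have hm1 : ∀ x : ZMod p, x + 1 = 0 ↔ x = (p : ZMod p) - 1 := by
    intro x; rw [hp0]
    constructor <;> intro h <;> linear_combination h
  have hmain : (C v1 ≠ 0 ∧ C v2 + 1 ≠ 0) ∨ (C v2 ≠ 0 ∧ C v1 + 1 ≠ 0) := by
    by_cases h1 : C v1 = 0
    · right
      refine ⟨fun h2 => hgood.1 ⟨h1, h2⟩, fun h => ?_⟩
      rw [hm1, h1] at h
      exact hne10 h
    · by_cases h2 : C v2 + 1 = 0
      · right
        rw [hm1] at h2
        refine ⟨fun h => ?_, fun h => ?_⟩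
        · rw [h] at h2; exact hne10 h2
        · rw [hm1] at h; exact hgood.2 ⟨h, h2⟩
      · left; exact ⟨h1, h2⟩
  rcases hmain with ⟨ha, hb⟩ | ⟨ha, hb⟩
  · have hr := reach_pairs e v1 v2 hv1 hv2 hne C ha hb (m + 1)
    convert hr using 1
    funext u
    by_cases hu1 : u = v1
    · simp [hu1]
    · by_cases hu2 : u = v2
      · simp [hu2, hne.symm]
      · by_cases hue : u ∈ e
        · simp only [if_neg hu1, if_neg hu2, if_pos hue, hcast]
        · simp [hu1, hu2, hue]
  · have hr := reach_pairs e v2 v1 hv2 hv1 hne.symm C ha hb (m + 1)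
    convert hr using 1
    funext u
    by_cases hu1 : u = v1
    · simp [hu1, hne]
    · by_cases hu2 : u = v2
      · simp [hu2, Ne.symm hne]
      · by_cases hue : u ∈ e
        · simp only [if_neg hu1, if_neg hu2, if_pos hue, hcast]
        · simp [hu1, hu2, hue]
end

section
/- Let p ≥ 3 be a prime, G = (V, E) a hypergraph, e ∈ E a hyperedge, and C : V → Z_p a state. Let v1 ≠ v2 be two vertices of e such that (C(v1), C(v2)) ∉ {(0, 0), (p−1, p−1)}. Then the state D defined by D(v1) = C(v1), D(v2) = C(v2), D(u) = C(u) − 1 for every u ∈ e with u ∉ {v1, v2}, and D(u) = C(u) for u ∉ e, is reachable from C by the Z_p-annihilating walk using only moves on the hyperedge e. -/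
lemma pair_reach {p : ℕ} {V : Type*} [DecidableEq V]
    (e : Finset V) (C : V → ZMod p) (a b : V) (ha : a ∈ e) (hb : b ∈ e)
    (hab : a ≠ b) (hA : C a ≠ 0) (hB : C b + 1 ≠ 0) :
    ∀ n : ℕ, AnnReachableOn e C
      (fun u => if u = a then C a else if u = b then C b
        else if u ∈ e then C u + 2 * n else C u)
  | 0 => by
      have h : (fun u => if u = a then C a else if u = b then C b
          else if u ∈ e then C u + 2 * (0 : ℕ) else C u) = C := by
        funext u; split_ifs with h1 h2 h3 <;> simp [*]
      rw [h]; exact Relation.ReflTransGen.refl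
  | (n+1) => by
      have ih := pair_reach e C a b ha hb hab hA hB n
      set Gn : V → ZMod p := fun u => if u = a then C a - 1 else if u = b then C b + 1
        else if u ∈ e then C u + 2 * n + 1 else C u with hGn
      have m1 : AnnMoveOn e (fun u => if u = a then C a else if u = b then C b
          else if u ∈ e then C u + 2 * n else C u) Gn := by
        refine ⟨a, ha, by simpa using hA, fun u => ?_⟩
        by_cases h1 : u = a
        · simp [hGn, h1]
        · by_cases h2 : u = b
          · simp [hGn, h1, h2, hb, Ne.symm hab]
          · by_cases h3 : u ∈ e <;> simp [hGn, h1, h2, h3]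
      have m2 : AnnMoveOn e Gn (fun u => if u = a then C a else if u = b then C b
          else if u ∈ e then C u + 2 * (n+1 : ℕ) else C u) := by
        refine ⟨b, hb, by simpa [hGn, Ne.symm hab] using hB, fun u => ?_⟩
        by_cases h2 : u = b
        · simp [hGn, h2, Ne.symm hab]
        · by_cases h1 : u = a
          · simp [hGn, h1, h2, ha, hab]
          · by_cases h3 : u ∈ e <;> simp [hGn, h1, h2, h3] <;> push_cast <;> ring
      exact (ih.tail m1).tail m2

/-- if `v1 ≠ v2` lie in the hyperedge `e` and `(C v1, C v2)` is neither
`(0,0)` nor `(p-1,p-1)`, then the state obtained from `C` by decreasing by one the value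
at every vertex of `e` other than `v1, v2` (and keeping everything else fixed) is
reachable from `C` using only moves on `e`. -/
theorem stmt6 {p : ℕ} [Fact p.Prime] (hp : 3 ≤ p)
    {V : Type*} [DecidableEq V]
    (E : Finset (Finset V)) (e : Finset V) (he : e ∈ E)
    (C : V → ZMod p) (v1 v2 : V) (hv1 : v1 ∈ e) (hv2 : v2 ∈ e) (hne : v1 ≠ v2)
    (hgood : ¬ (C v1 = 0 ∧ C v2 = 0) ∧
             ¬ (C v1 = (p : ZMod p) - 1 ∧ C v2 = (p : ZMod p) - 1)) :
    AnnReachableOn e C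
      (fun u => if u = v1 then C v1 else if u = v2 then C v2
        else if u ∈ e then C u - 1 else C u) := by
  have hprime : p.Prime := Fact.out
  have hodd : ¬ (2 ∣ p) := by
    intro h
    have := (Nat.prime_dvd_prime_iff_eq Nat.prime_two hprime).mp h
    omega
  have hdvd : 2 ∣ p - 1 := by omega
  have hcast : ((2 * ((p - 1) / 2) : ℕ) : ZMod p) = -1 := by
    rw [Nat.mul_div_cancel' hdvd]
    push_cast [Nat.cast_sub (by omega : 1 ≤ p)]
    simp [ZMod.natCast_self]
  have hcast' : (2 : ZMod p) * (((p - 1) / 2 : ℕ) : ZMod p) = -1 := by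
    push_cast at hcast; exact hcast
  have hm1 : ((p : ZMod p) - 1) = -1 := by simp [ZMod.natCast_self]
  have hm10 : (-1 : ZMod p) ≠ 0 := by
    simp only [ne_eq, neg_eq_zero]
    exact one_ne_zero
  by_cases hA : C v1 ≠ 0 ∧ C v2 + 1 ≠ 0
  · have := pair_reach e C v1 v2 hv1 hv2 hne hA.1 hA.2 ((p - 1) / 2)
    convert this using 2 with u
    by_cases h1 : u = v1
    · simp [h1]
    · by_cases h2 : u = v2
      · simp [h1, h2]
      · by_cases h3 : u ∈ e <;> simp [h1, h2, h3] <;> linear_combination -hcast'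
  · push_neg at hA
    have hB1 : C v2 ≠ 0 := by
      rcases eq_or_ne (C v1) 0 with h | h
      · exact fun h2 => hgood.1 ⟨h, h2⟩
      · have := hA h
        intro h2
        rw [h2] at this
        exact hm10 (by linear_combination -this)
    have hB2 : C v1 + 1 ≠ 0 := by
      rcases eq_or_ne (C v1) 0 with h | h
      · rw [h, zero_add]; exact one_ne_zero
      · have h2 := hA h
        intro h1
        exact hgood.2 ⟨by rw [hm1]; linear_combination h1, by rw [hm1]; linear_combination h2⟩
    have := pair_reach e C v2 v1 hv2 hv1 hne.symm hB1 hB2 ((p - 1) / 2)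
    convert this using 2 with u
    by_cases h1 : u = v1
    · simp [h1, hne]
    · by_cases h2 : u = v2
      · simp [h1, h2, Ne.symm hne]
      · by_cases h3 : u ∈ e <;> simp [h1, h2, h3] <;> linear_combination -hcast'
end
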